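/- (Parity vanishing.) Let R be a commutative ℚ-algebra, let r ≥ 1, and let γ_1,…,γ_r, c ∈ R. In the multivariate formal power series ring R[[t_1,…,t_r]] define 𝓗_r := ∏_{j=1}^r ( Σ_{m≥1} (1 − c^{m+1})·(B_{m+1}/(m+1))·γ_j^m·(t_j+⋯+t_r)^m/m! ). Then for all n_1,…,n_r ∈ ℕ₀ with n_1+⋯+n_r ≢ r (mod 2), the coefficient of t_1^{n_1}⋯t_r^{n_r} in 𝓗_r is 0. -/

import Mathlib

/-- The series `Σ_{m≥1} (1 − c^{m+1})·(B_{m+1}/(m+1))·γ^m·(t_j+⋯+t_r)^m/m!`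
in `R[[t_1,…,t_r]]` over a commutative `ℚ`-algebra `R`, defined coefficientwise
(the `m`-th summand is homogeneous of degree `m`, so only `m = |d|` contributes
to the coefficient at a monomial `d`). -/
noncomputable def calHFactor (R : Type*) [CommRing R] [Algebra ℚ R] (r : ℕ) (j : Fin r)
    (γ c : R) : MvPowerSeries (Fin r) R :=
  fun d =>
    (if 1 ≤ (d.sum fun _ e => e) then
        (1 - c ^ ((d.sum fun _ e => e) + 1)) *
          algebraMap ℚ R (bernoulli ((d.sum fun _ e => e) + 1) /
            (((d.sum fun _ e => e) : ℚ) + 1)) *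
          γ ^ (d.sum fun _ e => e) *
          algebraMap ℚ R (1 / (Nat.factorial (d.sum fun _ e => e) : ℚ))
      else 0) *
      MvPowerSeries.coeff d
        ((∑ k ∈ Finset.univ.filter fun k => j ≤ k, MvPowerSeries.X k) ^ (d.sum fun _ e => e))

lemma calHFactor_eq_zero_of_even (R : Type*) [CommRing R] [Algebra ℚ R] (r : ℕ) (j : Fin r)
    (γ c : R) (d : Fin r →₀ ℕ) (hd : (d.sum fun _ e => e) % 2 = 0) :
    calHFactor R r j γ c d = 0 := by
  unfold calHFactor
  set m := d.sum fun _ e => e with hm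
  rcases Nat.eq_zero_or_pos m with h0 | h1
  · rw [if_neg (by omega)]; ring
  · rw [if_pos (show 1 ≤ m from h1)]
    have hb : bernoulli (m + 1) = 0 := by
      rw [bernoulli_eq_bernoulli'_of_ne_one (by omega)]
      exact bernoulli'_eq_zero_of_odd ⟨m / 2, by omega⟩ (by omega)
    rw [hb]
    simp

theorem calH_parity_vanishing (R : Type*) [CommRing R] [Algebra ℚ R] (r : ℕ) (hr : 1 ≤ r)
    (γ : Fin r → R) (c : R) (n : Fin r → ℕ)
    (hpar : ¬ (∑ j, n j) ≡ r [MOD 2]) :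
    MvPowerSeries.coeff (Finsupp.equivFunOnFinite.symm n)
      (∏ j, calHFactor R r j (γ j) c) = 0 := by
  classical
  rw [MvPowerSeries.coeff_prod]
  apply Finset.sum_eq_zero
  intro l hl
  rw [Finset.mem_finsuppAntidiag] at hl
  by_cases hall : ∀ j : Fin r, ((l j).sum fun _ e => e) % 2 = 1
  · exfalso
    apply hpar
    have hdeg : ∑ j, ((l j).sum fun _ e => e) = ∑ j, n j := by
      have : ∀ d : Fin r →₀ ℕ, (d.sum fun _ e => e) = ∑ i, d i := fun d =>
        Finsupp.sum_fintype d _ (fun _ => rfl)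
      simp only [this]
      rw [Finset.sum_comm]
      refine Finset.sum_congr rfl fun i _ => ?_
      have := congrArg (fun f => f i) hl.1
      simpa [Finsupp.finset_sum_apply] using this
    have : (∑ j, ((l j).sum fun _ e => e)) % 2 = r % 2 := by
      rw [Finset.sum_nat_mod]
      simp only [hall]
      simp [Finset.sum_nat_mod, Finset.card_univ]
    unfold Nat.ModEq
    rw [← hdeg, this]
  · push_neg at hall
    obtain ⟨j, hj⟩ := hall
    apply Finset.prod_eq_zero (Finset.mem_univ j)
    exact calHFactor_eq_zero_of_even R r j (γ j) c (l j) (by omega)
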